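/- Let κ>0 and let φ:[0,1]^d→ℝ be continuous. Then the convexity penalty P^{(κ)}(φ) equals 0 if and only if φ is κ-strongly convex on [0,1]^d. -/

import Mathlib

open MeasureTheory ProbabilityTheory
open scoped ENNReal Classical

noncomputable section

abbrev E (d : ℕ) := EuclideanSpace ℝ (Fin d)

def cube (d : ℕ) : Set (E d) := {x | ∀ i, x i ∈ Set.Icc (0:ℝ) 1}

def lam (d : ℕ) : Measure (E d) := volume.restrict (cube d)

def KL {d : ℕ} (ν μ : Measure (E d)) : ℝ := ∫ x, Real.log ((ν.rnDeriv μ) x).toReal ∂ν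

def JS {d : ℕ} (μ ν : Measure (E d)) : ℝ :=
  (1/2) * (KL ν ((2:ℝ≥0∞)⁻¹ • (μ + ν)) + KL μ ((2:ℝ≥0∞)⁻¹ • (μ + ν)))

def ganLoss {d : ℕ} (μstar : Measure (E d)) (G : E d → E d) (D : E d → ℝ) : ℝ :=
  (1/2) * ((∫ y, Real.log (D y) ∂μstar) + ∫ z, Real.log (1 - D (G z)) ∂(lam d))

def hessW {d : ℕ} (φ : E d → ℝ) (x : E d) : E d →L[ℝ] E d →L[ℝ] ℝ :=
  fderivWithin ℝ (fun y => fderivWithin ℝ φ (cube d) y) (cube d) x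

def gradW {d : ℕ} (φ : E d → ℝ) (x : E d) : E d :=
  (InnerProductSpace.toDual ℝ (E d)).symm (fderivWithin ℝ φ (cube d) x)

def hessMat {d : ℕ} (φ : E d → ℝ) (x : E d) : Matrix (Fin d) (Fin d) ℝ :=
  fun i j => hessW φ x (EuclideanSpace.single i 1) (EuclideanSpace.single j 1)

def C2norm {d : ℕ} (φ : E d → ℝ) : ℝ :=
  ⨆ k : Fin 3, ⨆ x : cube d, ‖iteratedFDerivWithin ℝ (k : ℕ) φ (cube d) (x : E d)‖

def C21norm {d : ℕ} (φ : E d → ℝ) : ℝ :=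
  C2norm φ + ⨆ p : cube d × cube d,
    ‖iteratedFDerivWithin ℝ 2 φ (cube d) (p.1 : E d) - iteratedFDerivWithin ℝ 2 φ (cube d) (p.2 : E d)‖
      / ‖(p.1 : E d) - (p.2 : E d)‖

def Pen {d : ℕ} (κ : ℝ) (φ : E d → ℝ) : ℝ :=
  ∫ u, max 0 (φ ((2:ℝ)⁻¹ • (u.1 + u.2)) - (φ u.1 + φ u.2)/2 + (κ/8) * ‖u.1 - u.2‖^2)
    ∂((volume.restrict (cube d)).prod (volume.restrict (cube d)))
open Set Metric

variable {d : ℕ}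

lemma abs_coord_le_norm (x : E d) (i : Fin d) : |x i| ≤ ‖x‖ := by
  rw [EuclideanSpace.norm_eq, ← Real.sqrt_sq_eq_abs]
  apply Real.sqrt_le_sqrt
  have : (x i)^2 ≤ ∑ j, ‖x j‖^2 := by
    have := Finset.single_le_sum (f := fun j => ‖x j‖^2)
      (fun j _ => sq_nonneg _) (Finset.mem_univ i)
    simpa [Real.norm_eq_abs, sq_abs] using this
  simpa using this

lemma cube_convex : Convex ℝ (cube d) := by
  intro x hx y hy a b ha hb hab i
  have hxi := hx i; have hyi := hy i
  simp only [Set.mem_Icc] at *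
  have h : (a • x + b • y) i = a * x i + b * y i := rfl
  rw [h]
  constructor
  · exact add_nonneg (mul_nonneg ha hxi.1) (mul_nonneg hb hyi.1)
  · nlinarith [mul_nonneg ha (sub_nonneg.2 hxi.2), mul_nonneg hb (sub_nonneg.2 hyi.2)]

lemma cube_isClosed : IsClosed (cube d) := by
  have : cube d = ⋂ i, (fun x : E d => x i) ⁻¹' Set.Icc (0:ℝ) 1 := by
    ext x; simp [cube]
  rw [this]
  exact isClosed_iInter fun i => (isClosed_Icc).preimage (EuclideanSpace.proj i).continuous

lemma cube_isCompact : IsCompact (cube d) := by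
  refine Metric.isCompact_of_isClosed_isBounded cube_isClosed ?_
  refine (Metric.isBounded_iff_subset_closedBall 0).2 ⟨Real.sqrt d, fun x hx => ?_⟩
  simp only [mem_closedBall, dist_zero_right]
  rw [EuclideanSpace.norm_eq]
  apply Real.sqrt_le_sqrt
  calc ∑ j, ‖x j‖^2 ≤ ∑ _j : Fin d, 1 := by
        refine Finset.sum_le_sum fun j _ => ?_
        have := hx j; simp only [Set.mem_Icc] at this
        rw [Real.norm_eq_abs, sq_abs]; nlinarith [this.1, this.2]
    _ = d := by simp

/-- Every neighborhood of a point of the cube contains a ball inside the cube. -/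
lemma cube_nhds (x : E d) (hx : x ∈ cube d) {ε : ℝ} (hε : 0 < ε) :
    ∃ z δ, 0 < δ ∧ ball z δ ⊆ ball x ε ∩ cube d := by
  classical
  set c : E d := WithLp.toLp 2 (fun _ => (2:ℝ)⁻¹) with hc
  set t : ℝ := min 1 (ε / (2 * (‖c - x‖ + 1))) with ht
  have hnc : 0 ≤ ‖c - x‖ := norm_nonneg _
  have ht0 : 0 < t := by
    apply lt_min one_pos
    positivity
  have ht1 : t ≤ 1 := min_le_left _ _
  refine ⟨x + t • (c - x), t/2, by positivity, fun w hw => ?_⟩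
  rw [mem_ball] at hw
  rw [dist_eq_norm] at hw
  constructor
  · rw [mem_ball, dist_eq_norm]
    have h1 : ‖w - x‖ ≤ ‖w - (x + t • (c - x))‖ + ‖t • (c - x)‖ := by
      calc ‖w - x‖ = ‖(w - (x + t • (c - x))) + t • (c - x)‖ := by rw [sub_add, add_sub_cancel_right]
        _ ≤ _ := norm_add_le _ _
    have h2 : ‖t • (c - x)‖ = t * ‖c - x‖ := by
      rw [norm_smul, Real.norm_eq_abs, abs_of_pos ht0]
    have h3 : t ≤ ε / (2 * (‖c - x‖ + 1)) := min_le_right _ _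
    have h4 : t * ‖c - x‖ ≤ ε / 2 := by
      rw [le_div_iff₀ (by positivity)] at h3
      nlinarith
    have h5 : t / 2 ≤ ε / 4 := by
      rw [le_div_iff₀ (by positivity)] at h3
      nlinarith
    calc ‖w - x‖ ≤ ‖w - (x + t • (c - x))‖ + t * ‖c - x‖ := by rw [← h2]; exact h1
      _ < t/2 + ε/2 := by linarith
      _ ≤ ε := by linarith
  · intro i
    have hcoord : |w i - (x + t • (c - x)) i| < t/2 := by
      have := abs_coord_le_norm (w - (x + t • (c - x))) i
      have heq : (w - (x + t • (c - x))) i = w i - (x + t • (c - x)) i := rfl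
      rw [heq] at this
      linarith
    have hzi : (x + t • (c - x)) i = (1 - t) * x i + t * 2⁻¹ := by
      have : (x + t • (c - x)) i = x i + t * (2⁻¹ - x i) := rfl
      rw [this]; ring
    have hxi := hx i
    simp only [Set.mem_Icc] at hxi ⊢
    rw [hzi] at hcoord
    rw [abs_lt] at hcoord
    constructor
    · nlinarith [hxi.1, hcoord.1]
    · nlinarith [hxi.2, hcoord.2]

/-- A continuous midpoint-convex function on a convex set is convex. -/
lemma convexOn_of_midpoint {F : Type*} [NormedAddCommGroup F] [NormedSpace ℝ F]
    {s : Set F} (hs : Convex ℝ s) {f : F → ℝ} (hc : ContinuousOn f s)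
    (hm : ∀ x ∈ s, ∀ y ∈ s, f ((2:ℝ)⁻¹ • (x + y)) ≤ (f x + f y) / 2) :
    ConvexOn ℝ s f := by
  refine ⟨hs, fun x hx y hy a b ha hb hab => ?_⟩
  -- reduce to the segment parametrization
  set γ : ℝ → F := fun t => x + t • (y - x) with hγ
  have hγmem : ∀ t ∈ Set.Icc (0:ℝ) 1, γ t ∈ s := fun t ht =>
    hs.add_smul_sub_mem hx hy ht
  set h : ℝ → ℝ := fun t => f (γ t) - ((1 - t) * f x + t * f y) with hh
  have hcont : ContinuousOn h (Set.Icc (0:ℝ) 1) := by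
    apply ContinuousOn.sub
    · exact hc.comp (by fun_prop) hγmem
    · fun_prop
  set S : Set ℝ := {t ∈ Set.Icc (0:ℝ) 1 | h t ≤ 0} with hS
  have hSclosed : IsClosed S :=
    hcont.preimage_isClosed_of_isClosed isClosed_Icc isClosed_Iic
  have hScompact : IsCompact S :=
    isCompact_Icc.of_isClosed_subset hSclosed fun t ht => ht.1
  have h0 : (0:ℝ) ∈ S := ⟨⟨le_refl _, zero_le_one⟩, by simp [hh, hγ]⟩
  have h1 : (1:ℝ) ∈ S := ⟨⟨zero_le_one, le_refl _⟩, by simp [hh, hγ]⟩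
  have hmid : ∀ p ∈ S, ∀ q ∈ S, (p + q) / 2 ∈ S := by
    intro p hp q hq
    obtain ⟨hp1, hp2⟩ := hp
    obtain ⟨hq1, hq2⟩ := hq
    have hmem : (p + q)/2 ∈ Set.Icc (0:ℝ) 1 := by
      constructor
      · linarith [hp1.1, hq1.1]
      · linarith [hp1.2, hq1.2]
    refine ⟨hmem, ?_⟩
    have hmp := hm (γ p) (hγmem p hp1) (γ q) (hγmem q hq1)
    have hgm : γ ((p + q)/2) = (2:ℝ)⁻¹ • (γ p + γ q) := by
      simp only [hγ]
      module
    rw [← hgm] at hmp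
    have hkey : h ((p+q)/2) ≤ (h p + h q)/2 := by
      simp only [hh]
      have he : ((1 - (p+q)/2) * f x + ((p+q)/2) * f y)
          = (((1 - p) * f x + p * f y) + ((1 - q) * f x + q * f y))/2 := by ring
      rw [he]
      linarith
    simp only [hh] at hkey hp2 hq2 ⊢
    linarith
  -- the claim: every t ∈ [0,1] is in S
  have hall : ∀ t ∈ Set.Icc (0:ℝ) 1, t ∈ S := by
    intro t ht
    by_contra htS
    set A : Set ℝ := S ∩ Set.Icc 0 t with hA
    set B : Set ℝ := S ∩ Set.Icc t 1 with hB
    have hAne : A.Nonempty := ⟨0, h0, le_refl _, ht.1⟩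
    have hBne : B.Nonempty := ⟨1, h1, ht.2, le_refl _⟩
    have hAcomp : IsCompact A := hScompact.inter_right isClosed_Icc
    have hBcomp : IsCompact B := hScompact.inter_right isClosed_Icc
    have haA : sSup A ∈ A := hAcomp.sSup_mem hAne
    have hbB : sInf B ∈ B := hBcomp.sInf_mem hBne
    set p := sSup A with hp
    set q := sInf B with hq
    have hpt : p < t := lt_of_le_of_ne haA.2.2 (fun he => htS (he ▸ haA.1))
    have hqt : t < q := lt_of_le_of_ne hbB.2.1 (fun he => htS (he ▸ hbB.1))
    have hmS : (p + q)/2 ∈ S := hmid p haA.1 q hbB.1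
    rcases le_or_gt ((p+q)/2) t with hle | hlt
    · have : (p+q)/2 ∈ A := ⟨hmS, ⟨by linarith [haA.2.1, hbB.2.1, ht.1], hle⟩⟩
      have := le_csSup hAcomp.bddAbove this
      linarith
    · have : (p+q)/2 ∈ B := ⟨hmS, ⟨le_of_lt hlt, by linarith [haA.2.2, hbB.2.2, ht.2]⟩⟩
      have := csInf_le hBcomp.bddBelow this
      linarith
  -- conclude
  have hb1 : b ∈ Set.Icc (0:ℝ) 1 := ⟨hb, by linarith⟩
  have hkey := (hall b hb1).2
  simp only [hh] at hkey
  have hγb : γ b = a • x + b • y := by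
    simp only [hγ]
    have ha' : a = 1 - b := by linarith
    rw [ha']; module
  rw [hγb] at hkey
  rw [smul_eq_mul, smul_eq_mul]
  have ha' : a * f x = (1 - b) * f x := by
    have : a = 1 - b := by linarith
    rw [this]
  linarith

lemma mid_mem_cube {u v : E d} (hu : u ∈ cube d) (hv : v ∈ cube d) :
    (2:ℝ)⁻¹ • (u + v) ∈ cube d := by
  have := cube_convex hu hv (by norm_num : (0:ℝ) ≤ 2⁻¹) (by norm_num : (0:ℝ) ≤ 2⁻¹)
    (by norm_num)
  rwa [← smul_add] at this

lemma strong_identity (κ : ℝ) (φ : E d → ℝ) (u v : E d) :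
    (φ ((2:ℝ)⁻¹ • (u + v)) - (κ/2) * ‖(2:ℝ)⁻¹ • (u + v)‖^2)
      - ((φ u - (κ/2) * ‖u‖^2) + (φ v - (κ/2) * ‖v‖^2))/2
    = φ ((2:ℝ)⁻¹ • (u + v)) - (φ u + φ v)/2 + (κ/8) * ‖u - v‖^2 := by
  have hp := parallelogram_law_with_norm ℝ u v
  have hs : ‖(2:ℝ)⁻¹ • (u + v)‖ = 2⁻¹ * ‖u + v‖ := by
    rw [norm_smul]; norm_num
  rw [hs]
  linear_combination (-(κ/8)) * hp


/-- for a continuous `φ` on the cube and `κ > 0`, the convexity penalty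
`P^{(κ)}(φ)` vanishes if and only if `φ` is `κ`-strongly convex on the cube. -/
theorem stmt17 {d : ℕ} (κ : ℝ) (hκ : 0 < κ) (φ : E d → ℝ)
    (hφ : ContinuousOn φ (cube d)) :
    Pen κ φ = 0 ↔ ConvexOn ℝ (cube d) (fun x => φ x - (κ/2) * ‖x‖^2) := by
  set K : Set (E d × E d) := cube d ×ˢ cube d with hK
  set μ : Measure (E d × E d) :=
    (volume.restrict (cube d)).prod (volume.restrict (cube d)) with hμdef
  set Fn : E d × E d → ℝ :=
    fun p => φ ((2:ℝ)⁻¹ • (p.1 + p.2)) - (φ p.1 + φ p.2)/2 + (κ/8) * ‖p.1 - p.2‖^2 with hFn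
  have hPen : Pen κ φ = ∫ p, max 0 (Fn p) ∂μ := rfl
  have hKmeas : MeasurableSet K := (cube_isClosed.prod cube_isClosed).measurableSet
  have hμK : μ = (volume.prod (volume : Measure (E d))).restrict K :=
    Measure.prod_restrict _ _
  have hKcomp : IsCompact K := cube_isCompact.prod cube_isCompact
  -- continuity of Fn on K
  have hmapsTo : Set.MapsTo (fun p : E d × E d => (2:ℝ)⁻¹ • (p.1 + p.2)) K (cube d) :=
    fun p hp => mid_mem_cube hp.1 hp.2
  have hF : ContinuousOn Fn K := by
    apply ContinuousOn.add
    · apply ContinuousOn.sub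
      · exact hφ.comp (by fun_prop) hmapsTo
      · exact (((hφ.comp continuous_fst.continuousOn fun p hp => hp.1).add
          (hφ.comp continuous_snd.continuousOn fun p hp => hp.2)).div_const 2)
    · exact Continuous.continuousOn (by fun_prop)
  have hg : ContinuousOn (fun p => max 0 (Fn p)) K := continuousOn_const.sup hF
  have hint : Integrable (fun p => max 0 (Fn p)) μ := by
    rw [hμK]
    exact hg.integrableOn_compact hKcomp
  constructor
  · intro h
    have hae : (fun p => max 0 (Fn p)) =ᵐ[μ] 0 :=
      (integral_eq_zero_iff_of_nonneg (fun p => le_max_left 0 _) hint).1 (hPen ▸ h)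
    have hnull : μ {p | max 0 (Fn p) ≠ 0} = 0 := by
      have := hae
      rw [Filter.eventuallyEq_iff_exists_mem] at this
      exact ae_iff.1 hae
    -- Fn ≤ 0 everywhere on K
    have hzero : ∀ p ∈ K, Fn p ≤ 0 := by
      by_contra hcon
      push_neg at hcon
      obtain ⟨p, hpK, hpos⟩ := hcon
      have hcw : ContinuousWithinAt Fn K p := hF p hpK
      have hev : {q | 0 < Fn q} ∈ nhdsWithin p K := hcw (Ioi_mem_nhds hpos)
      obtain ⟨U, hUopen, hpU, hsub⟩ := mem_nhdsWithin.1 hev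
      obtain ⟨ε, hε, hball⟩ := Metric.isOpen_iff.1 hUopen p hpU
      obtain ⟨z1, δ1, hδ1, hsub1⟩ := cube_nhds p.1 hpK.1 hε
      obtain ⟨z2, δ2, hδ2, hsub2⟩ := cube_nhds p.2 hpK.2 hε
      set δ := min δ1 δ2 with hδ
      have hδ0 : 0 < δ := lt_min hδ1 hδ2
      set V : Set (E d × E d) := Metric.ball z1 δ ×ˢ Metric.ball z2 δ with hV
      have hVsub : V ⊆ U ∩ K := by
        rintro ⟨w1, w2⟩ ⟨hw1, hw2⟩
        have h1 := hsub1 (Metric.ball_subset_ball (min_le_left _ _) hw1)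
        have h2 := hsub2 (Metric.ball_subset_ball (min_le_right _ _) hw2)
        constructor
        · apply hball
          rw [← ball_prod_same]
          exact ⟨h1.1, h2.1⟩
        · exact ⟨h1.2, h2.2⟩
      have hVpos : 0 < μ V := by
        rw [hμdef, hV, Measure.prod_prod]
        have h1 : 0 < (volume.restrict (cube d)) (Metric.ball z1 δ) := by
          rw [Measure.restrict_apply measurableSet_ball]
          have : Metric.ball z1 δ ∩ cube d = Metric.ball z1 δ := by
            apply Set.inter_eq_left.2
            intro w hw
            exact (hsub1 (Metric.ball_subset_ball (min_le_left _ _) hw)).2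
          rw [this]
          exact Metric.measure_ball_pos _ _ hδ0
        have h2 : 0 < (volume.restrict (cube d)) (Metric.ball z2 δ) := by
          rw [Measure.restrict_apply measurableSet_ball]
          have : Metric.ball z2 δ ∩ cube d = Metric.ball z2 δ := by
            apply Set.inter_eq_left.2
            intro w hw
            exact (hsub2 (Metric.ball_subset_ball (min_le_right _ _) hw)).2
          rw [this]
          exact Metric.measure_ball_pos _ _ hδ0
        exact ENNReal.mul_pos h1.ne' h2.ne'
      have hVsub' : V ⊆ {p | max 0 (Fn p) ≠ 0} := by
        intro q hq
        have : 0 < Fn q := hsub (hVsub hq)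
        simp only [Set.mem_setOf_eq]
        rw [max_eq_right this.le]
        exact this.ne'
      have := measure_mono (μ := μ) hVsub'
      rw [hnull] at this
      exact absurd (le_antisymm this zero_le) hVpos.ne'
    -- conclude convexity
    apply convexOn_of_midpoint cube_convex
    · apply hφ.sub
      exact Continuous.continuousOn (by fun_prop)
    · intro x hx y hy
      have hFn0 : Fn (x, y) ≤ 0 := hzero (x, y) ⟨hx, hy⟩
      have hid := strong_identity κ φ x y
      simp only [hFn] at hFn0
      linarith [hid, hFn0]
  · intro hconv
    have hzero : ∀ p ∈ K, max 0 (Fn p) = 0 := by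
      rintro ⟨x, y⟩ ⟨hx, hy⟩
      have hm := hconv.2 hx hy (by norm_num : (0:ℝ) ≤ 2⁻¹) (by norm_num : (0:ℝ) ≤ 2⁻¹)
        (by norm_num)
      rw [← smul_add] at hm
      simp only [smul_eq_mul] at hm
      have hid := strong_identity κ φ x y
      have : Fn (x, y) ≤ 0 := by
        simp only [hFn]
        linarith [hid, hm]
      exact max_eq_left this
    rw [hPen, hμK, setIntegral_congr_fun hKmeas hzero]
    simp

end
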